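/- Let a ∈ GL(2,ℂ) with |det a| = 1, κ = diag(a, (a†)⁻¹), λ > 0, and let Λ ∈ GL(4,ℝ) be the Lorentz transformation determined by M(Λv) = a M(v) a† for all v ∈ ℝ⁴. Let B_0,…,B_3 and C_0,…,C_3 ∈ M₄(ℂ), and define A_μ = λ⁻¹ (Λ⁻¹)^ν{}_μ κ B_ν κ⁻¹ + C_μ (sum over ν). Then Σ^μ A_μ = λ⁻¹ κ (Σ^ν B_ν) κ⁻¹ + Σ^μ C_μ; in particular, a potential field A transforming with the Jacobian factor (λΛ)⁻¹ and conjugation by κ induces, via Φ = Σ^μ A_μ, an interaction field transforming with the factor λ⁻¹ and conjugation by κ. -/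

import Mathlib

open Matrix Complex

noncomputable section

abbrev M2 : Type := Matrix (Fin 2) (Fin 2) ℂ
abbrev M4 : Type := Matrix (Fin 2 ⊕ Fin 2) (Fin 2 ⊕ Fin 2) ℂ

/-- The Pauli matrices `σ₀ = I₂, σ₁, σ₂, σ₃`. -/
def pauli : Fin 4 → M2
  | 0 => 1
  | 1 => !![0, 1; 1, 0]
  | 2 => !![0, -Complex.I; Complex.I, 0]
  | 3 => !![1, 0; 0, -1]

/-- `M(x) = i (x⁰σ₀ + x¹σ₁ + x²σ₂ + x³σ₃)`. -/
def Mmap (x : Fin 4 → ℝ) : M2 := Complex.I • ∑ μ : Fin 4, (x μ : ℂ) • pauli μ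

/-- The chiral Dirac gamma matrices: `γ⁰ = [[0,−I₂],[−I₂,0]]`, `γʲ = [[0,σⱼ],[−σⱼ,0]]`. -/
def gammaM : Fin 4 → M4
  | 0 => fromBlocks 0 (-1) (-1) 0
  | 1 => fromBlocks 0 (pauli 1) (-(pauli 1)) 0
  | 2 => fromBlocks 0 (pauli 2) (-(pauli 2)) 0
  | 3 => fromBlocks 0 (pauli 3) (-(pauli 3)) 0

/-- `Σ^μ = iγ^μ` (the raised-index intertwining matrices). -/
def SigmaUp (μ : Fin 4) : M4 := Complex.I • gammaM μ

/-- `κ(a) = diag(a, (a†)⁻¹)`. -/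
def kappaM (a : M2) : M4 := fromBlocks a 0 0 (aᴴ)⁻¹

lemma mmap_explicit (x : Fin 4 → ℝ) :
    Mmap x = !![Complex.I*(x 0 + x 3), (x 2) + Complex.I*(x 1);
                -(x 2) + Complex.I*(x 1), Complex.I*(x 0 - x 3)] := by
  ext i j
  fin_cases i <;> fin_cases j <;>
    simp [Mmap, pauli, Fin.sum_univ_four] <;> push_cast <;> ring_nf <;>
    simp [Complex.I_sq] <;> ring

lemma mmap_det (x : Fin 4 → ℝ) :
    (Mmap x).det = ((-(x 0)^2 + (x 1)^2 + (x 2)^2 + (x 3)^2 : ℝ) : ℂ) := by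
  rw [mmap_explicit, det_fin_two_of]
  push_cast
  ring_nf
  simp [Complex.I_sq]
  ring

lemma mmap_adj (x : Fin 4 → ℝ) :
    (Mmap x).adjugate = Mmap ![x 0, -(x 1), -(x 2), -(x 3)] := by
  rw [mmap_explicit, mmap_explicit, Matrix.adjugate_fin_two]
  norm_num
  refine ⟨⟨?_, ?_⟩, ?_, ?_⟩ <;> simp <;> push_cast <;> ring

lemma mmap_single (μ : Fin 4) : Mmap (Pi.single μ 1) = Complex.I • pauli μ := by
  unfold Mmap
  congr 1
  rw [Fin.sum_univ_four]
  fin_cases μ <;> simp [Pi.single_apply]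

lemma mmap_sum (r : Fin 4 → ℝ) : ∑ μ : Fin 4, (r μ:ℂ) • (Complex.I • pauli μ) = Mmap r := by
  unfold Mmap
  rw [Finset.smul_sum]
  congr 1; ext μ
  rw [smul_comm]

def epR : Fin 4 → ℝ := ![1, -1, -1, -1]

lemma lorentz_inv (a : M2) (hadet : ‖a.det‖ = 1)
    (Λ : Matrix (Fin 4) (Fin 4) ℝ)
    (hΛa : ∀ v : Fin 4 → ℝ, Mmap (Λ.mulVec v) = a * Mmap v * aᴴ) :
    Λ⁻¹ = Matrix.of (fun ν μ => epR ν * Λ μ ν * epR μ) := by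
  have hdet1 : a.det * star a.det = 1 := by
    have h := Complex.mul_conj a.det
    rw [Complex.normSq_eq_norm_sq, hadet] at h
    simpa using h
  have hq : ∀ x : Fin 4 → ℝ,
      -(Λ.mulVec x 0)^2 + (Λ.mulVec x 1)^2 + (Λ.mulVec x 2)^2 + (Λ.mulVec x 3)^2
        = -(x 0)^2 + (x 1)^2 + (x 2)^2 + (x 3)^2 := by
    intro x
    have h := congrArg Matrix.det (hΛa x)
    rw [det_mul, det_mul, mmap_det, mmap_det, det_conjTranspose] at h
    have h2 : a.det * ((-(x 0)^2 + (x 1)^2 + (x 2)^2 + (x 3)^2 : ℝ) : ℂ) * star a.det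
        = ((-(x 0)^2 + (x 1)^2 + (x 2)^2 + (x 3)^2 : ℝ) : ℂ) := by
      calc a.det * ((-(x 0)^2 + (x 1)^2 + (x 2)^2 + (x 3)^2 : ℝ) : ℂ) * star a.det
          = (a.det * star a.det) * ((-(x 0)^2 + (x 1)^2 + (x 2)^2 + (x 3)^2 : ℝ) : ℂ) := by ring
        _ = _ := by rw [hdet1, one_mul]
    rw [h2] at h
    exact_mod_cast h
  have hb : ∀ x y : Fin 4 → ℝ,
      Λ.mulVec x 0 * Λ.mulVec y 0 - Λ.mulVec x 1 * Λ.mulVec y 1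
        - Λ.mulVec x 2 * Λ.mulVec y 2 - Λ.mulVec x 3 * Λ.mulVec y 3
        = x 0 * y 0 - x 1 * y 1 - x 2 * y 2 - x 3 * y 3 := by
    intro x y
    have h1 := hq x
    have h2 := hq y
    have h3 := hq (x + y)
    simp only [Matrix.mulVec_add, Pi.add_apply] at h3
    ring_nf at h1 h2 h3 ⊢
    linarith
  refine Matrix.inv_eq_left_inv ?_
  ext ρ σ
  have h := hb (Pi.single ρ 1) (Pi.single σ 1)
  simp only [Matrix.mulVec_single, mul_one] at h
  rw [Matrix.mul_apply, Fin.sum_univ_four]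
  fin_cases ρ <;> fin_cases σ <;>
    simp [epR, Matrix.one_apply, Pi.single_apply] at h ⊢ <;> linarith

lemma adj_unit (a : M2) (ha : IsUnit a) : a.adjugate = a.det • a⁻¹ := by
  have hu : IsUnit a.det := (Matrix.isUnit_iff_isUnit_det a).mp ha
  rw [Matrix.inv_def, smul_smul, Ring.inverse_eq_inv', mul_inv_cancel₀ hu.ne_zero, one_smul]

lemma star_det_mul (a : M2) (hadet : ‖a.det‖ = 1) : star a.det * a.det = 1 := by
  have h := Complex.mul_conj a.det
  rw [Complex.normSq_eq_norm_sq, hadet] at h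
  rw [mul_comm]
  simpa using h

lemma adj_conj (a : M2) (ha : IsUnit a) (hadet : ‖a.det‖ = 1) (P : M2) :
    (a * P * aᴴ).adjugate = (aᴴ)⁻¹ * P.adjugate * a⁻¹ := by
  have haH : IsUnit aᴴ := (Matrix.isUnit_conjTranspose a).mpr ha
  rw [Matrix.adjugate_mul_distrib, Matrix.adjugate_mul_distrib,
    adj_unit a ha, adj_unit aᴴ haH, Matrix.det_conjTranspose]
  simp only [smul_mul_assoc, mul_smul_comm, smul_smul, mul_assoc]
  rw [mul_comm, star_det_mul a hadet, one_smul]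

lemma kappa_inv0 (a : M2) (ha : IsUnit a) :
    (Matrix.fromBlocks a 0 0 (aᴴ)⁻¹ : Matrix (Fin 2 ⊕ Fin 2) (Fin 2 ⊕ Fin 2) ℂ)⁻¹
      = Matrix.fromBlocks a⁻¹ 0 0 aᴴ := by
  apply Matrix.inv_eq_right_inv
  rw [Matrix.fromBlocks_multiply]
  have h1 : a * a⁻¹ = 1 := Matrix.mul_nonsing_inv a ((Matrix.isUnit_iff_isUnit_det a).mp ha)
  have h2 : (aᴴ)⁻¹ * aᴴ = 1 := Matrix.nonsing_inv_mul aᴴ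
    ((Matrix.isUnit_iff_isUnit_det aᴴ).mp ((Matrix.isUnit_conjTranspose a).mpr ha))
  simp [h1, h2, Matrix.fromBlocks_one]

lemma mmap_smul (r : ℝ) (x : Fin 4 → ℝ) :
    Mmap (fun μ => r * x μ) = (r : ℂ) • Mmap x := by
  rw [mmap_explicit, mmap_explicit]
  ext i j
  fin_cases i <;> fin_cases j <;> simp [Matrix.smul_apply] <;> push_cast <;> ring

lemma sum_smul_mmap (r : Fin 4 → ℝ) :
    ∑ μ : Fin 4, (r μ : ℂ) • Mmap (Pi.single μ 1) = Mmap r := by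
  simp only [mmap_single]
  exact mmap_sum r

lemma epR_sq (μ : Fin 4) : epR μ * epR μ = 1 := by fin_cases μ <;> norm_num [epR]

lemma adj_single (μ : Fin 4) :
    (Mmap (Pi.single μ 1)).adjugate = (epR μ : ℂ) • Mmap (Pi.single μ 1) := by
  rw [mmap_adj, ← mmap_smul]
  refine congrArg Mmap ?_
  funext i
  fin_cases μ <;> fin_cases i <;> simp [epR, Pi.single_apply]

lemma sigma_blocks (μ : Fin 4) :
    SigmaUp μ = fromBlocks 0 (-((epR μ : ℂ) • Mmap (Pi.single μ 1)))
      (-(Mmap (Pi.single μ 1))) 0 := by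
  fin_cases μ <;>
    norm_num [SigmaUp, gammaM, mmap_single, epR, Matrix.fromBlocks_smul, smul_smul, pauli]

lemma key_lemma (a : M2) (ha : IsUnit a) (hadet : ‖a.det‖ = 1)
    (Λ : Matrix (Fin 4) (Fin 4) ℝ)
    (hΛa : ∀ v : Fin 4 → ℝ, Mmap (Λ.mulVec v) = a * Mmap v * aᴴ) (ν : Fin 4) :
    ∑ μ : Fin 4, ((Λ⁻¹ ν μ : ℝ) : ℂ) • SigmaUp μ
      = kappaM a * SigmaUp ν * (kappaM a)⁻¹ := by
  have hLinv := lorentz_inv a hadet Λ hΛa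
  have hupper : ∑ μ : Fin 4, ((Λ⁻¹ ν μ : ℝ) : ℂ) • ((epR μ : ℂ) • Mmap (Pi.single μ 1))
      = (epR ν : ℂ) • (a * Mmap (Pi.single ν 1) * aᴴ) := by
    calc ∑ μ : Fin 4, ((Λ⁻¹ ν μ : ℝ) : ℂ) • ((epR μ : ℂ) • Mmap (Pi.single μ 1))
        = ∑ μ : Fin 4, ((Λ⁻¹ ν μ * epR μ : ℝ) : ℂ) • Mmap (Pi.single μ 1) := by
          congr 1; funext μ; rw [smul_smul]; push_cast; ring_nf
      _ = Mmap (fun μ => Λ⁻¹ ν μ * epR μ) := sum_smul_mmap _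
      _ = Mmap (fun μ => epR ν * (Λ.mulVec (Pi.single ν 1) μ)) := by
          refine congrArg Mmap ?_; funext μ; rw [hLinv]
          simp only [Matrix.mulVec_single_one, Matrix.col_apply, Matrix.transpose_apply, Matrix.of_apply, mul_one]
          rw [mul_assoc (epR ν * Λ μ ν), epR_sq, mul_one]
      _ = (epR ν : ℂ) • Mmap (Λ.mulVec (Pi.single ν 1)) := mmap_smul _ _
      _ = (epR ν : ℂ) • (a * Mmap (Pi.single ν 1) * aᴴ) := by rw [hΛa]
  have hlower : ∑ μ : Fin 4, ((Λ⁻¹ ν μ : ℝ) : ℂ) • Mmap (Pi.single μ 1)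
      = (aᴴ)⁻¹ * Mmap (Pi.single ν 1) * a⁻¹ := by
    have e1 : Mmap (Pi.single ν 1) = (epR ν : ℂ) • (Mmap (Pi.single ν 1)).adjugate := by
      rw [adj_single, smul_smul,
        show ((epR ν : ℂ)) * (epR ν : ℂ) = 1 from by exact_mod_cast epR_sq ν, one_smul]
    calc ∑ μ : Fin 4, ((Λ⁻¹ ν μ : ℝ) : ℂ) • Mmap (Pi.single μ 1)
        = Mmap (fun μ => Λ⁻¹ ν μ) := sum_smul_mmap _
      _ = Mmap (fun μ => epR ν * (![Λ.mulVec (Pi.single ν 1) 0, -(Λ.mulVec (Pi.single ν 1) 1),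
            -(Λ.mulVec (Pi.single ν 1) 2), -(Λ.mulVec (Pi.single ν 1) 3)] μ)) := by
          refine congrArg Mmap ?_; funext μ; rw [hLinv]
          fin_cases μ <;> simp [Matrix.mulVec_single, epR] <;> ring
      _ = (epR ν : ℂ) • Mmap ![Λ.mulVec (Pi.single ν 1) 0, -(Λ.mulVec (Pi.single ν 1) 1),
            -(Λ.mulVec (Pi.single ν 1) 2), -(Λ.mulVec (Pi.single ν 1) 3)] := mmap_smul _ _
      _ = (epR ν : ℂ) • (Mmap (Λ.mulVec (Pi.single ν 1))).adjugate := by rw [mmap_adj]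
      _ = (epR ν : ℂ) • (a * Mmap (Pi.single ν 1) * aᴴ).adjugate := by rw [hΛa]
      _ = (epR ν : ℂ) • ((aᴴ)⁻¹ * (Mmap (Pi.single ν 1)).adjugate * a⁻¹) := by
          rw [adj_conj a ha hadet]
      _ = (aᴴ)⁻¹ * Mmap (Pi.single ν 1) * a⁻¹ := by
          conv_rhs => rw [e1]
          simp only [Matrix.mul_smul, Matrix.smul_mul]
  rw [kappaM, kappa_inv0 a ha, sigma_blocks ν, Matrix.fromBlocks_multiply,
    Matrix.fromBlocks_multiply]
  simp only [Fin.sum_univ_four, sigma_blocks, Matrix.fromBlocks_smul, Matrix.fromBlocks_add]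
  rw [Matrix.fromBlocks_inj]
  refine ⟨by simp, ?_, ?_, by simp⟩
  · simp only [smul_neg, Matrix.mul_zero, Matrix.zero_mul, Matrix.mul_neg, Matrix.neg_mul,
      add_zero, zero_add, ← neg_add, neg_inj]
    have h := hupper
    rw [Fin.sum_univ_four] at h
    rw [h]
    simp only [mul_smul_comm, smul_mul_assoc]
  · simp only [smul_neg, Matrix.mul_zero, Matrix.zero_mul, Matrix.mul_neg, Matrix.neg_mul,
      add_zero, zero_add, ← neg_add, neg_inj]
    have h := hlower
    rw [Fin.sum_univ_four] at h
    rw [h]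
/-- if `A_μ = λ⁻¹ (Λ⁻¹)^ν{}_μ κ B_ν κ⁻¹ + C_μ` where `Λ ∈ GL(4,ℝ)` is the
Lorentz transformation determined by `M(Λv) = a M(v) a†`, then
`Σ^μ A_μ = λ⁻¹ κ (Σ^ν B_ν) κ⁻¹ + Σ^μ C_μ`. -/
theorem stmt18 (a : M2) (ha : IsUnit a) (hadet : ‖a.det‖ = 1)
    (lam : ℝ) (hlam : 0 < lam)
    (Λ : Matrix (Fin 4) (Fin 4) ℝ) (hΛ : IsUnit Λ)
    (hΛa : ∀ v : Fin 4 → ℝ, Mmap (Λ.mulVec v) = a * Mmap v * aᴴ)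
    (B C A : Fin 4 → M4)
    (hA : ∀ μ : Fin 4, A μ =
      lam⁻¹ • ∑ ν : Fin 4, ((Λ⁻¹ ν μ : ℝ) : ℂ) • (kappaM a * B ν * (kappaM a)⁻¹) + C μ) :
    ∑ μ : Fin 4, SigmaUp μ * A μ =
      lam⁻¹ • (kappaM a * (∑ ν : Fin 4, SigmaUp ν * B ν) * (kappaM a)⁻¹) +
      ∑ μ : Fin 4, SigmaUp μ * C μ := by
  have hκ := key_lemma a ha hadet Λ hΛa
  have hκκ : (kappaM a)⁻¹ * kappaM a = 1 := by
    rw [kappaM, kappa_inv0 a ha, Matrix.fromBlocks_multiply]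
    have h1 : a⁻¹ * a = 1 := Matrix.nonsing_inv_mul a ((Matrix.isUnit_iff_isUnit_det a).mp ha)
    have h2 : aᴴ * (aᴴ)⁻¹ = 1 := Matrix.mul_nonsing_inv aᴴ
      ((Matrix.isUnit_iff_isUnit_det aᴴ).mp ((Matrix.isUnit_conjTranspose a).mpr ha))
    simp [h1, h2, Matrix.fromBlocks_one]
  have hmid : ∀ X Y : M4, (kappaM a * X * (kappaM a)⁻¹) * (kappaM a * Y * (kappaM a)⁻¹)
      = kappaM a * (X * Y) * (kappaM a)⁻¹ := by
    intro X Y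
    calc (kappaM a * X * (kappaM a)⁻¹) * (kappaM a * Y * (kappaM a)⁻¹)
        = kappaM a * X * ((kappaM a)⁻¹ * kappaM a) * Y * (kappaM a)⁻¹ := by
          simp only [mul_assoc]
      _ = kappaM a * (X * Y) * (kappaM a)⁻¹ := by
          rw [hκκ, mul_one, mul_assoc (kappaM a)]
  calc ∑ μ : Fin 4, SigmaUp μ * A μ
      = ∑ μ : Fin 4, (lam⁻¹ • ∑ ν : Fin 4, ((Λ⁻¹ ν μ : ℝ) : ℂ) •
          (SigmaUp μ * (kappaM a * B ν * (kappaM a)⁻¹)) + SigmaUp μ * C μ) := by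
        refine Finset.sum_congr rfl fun μ _ => ?_
        rw [hA μ, mul_add]
        congr 1
        rw [Matrix.mul_smul, Finset.mul_sum]
        simp only [mul_smul_comm]
    _ = lam⁻¹ • ∑ ν : Fin 4, (∑ μ : Fin 4, ((Λ⁻¹ ν μ : ℝ) : ℂ) • SigmaUp μ) *
          (kappaM a * B ν * (kappaM a)⁻¹) + ∑ μ : Fin 4, SigmaUp μ * C μ := by
        rw [Finset.sum_add_distrib, ← Finset.smul_sum, Finset.sum_comm]
        simp only [Finset.sum_mul, smul_mul_assoc]
    _ = lam⁻¹ • ∑ ν : Fin 4, (kappaM a * SigmaUp ν * (kappaM a)⁻¹) *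
          (kappaM a * B ν * (kappaM a)⁻¹) + ∑ μ : Fin 4, SigmaUp μ * C μ := by
        simp only [hκ]
    _ = lam⁻¹ • (kappaM a * (∑ ν : Fin 4, SigmaUp ν * B ν) * (kappaM a)⁻¹) +
        ∑ μ : Fin 4, SigmaUp μ * C μ := by
        congr 1
        simp only [hmid]
        rw [Finset.mul_sum, Finset.sum_mul]
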